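/- arXiv:2605.20629 — 3 statements merged into one kernel-verified Lean document; each statement's English description precedes it below -/
import Mathlib

section
/- Let D be a maximal ASPD on a finite set A with n = |A|. If a ∈ A and ω ∈ D satisfy ω(k) = a for some 1 ≤ k ≤ n, then for every 1 ≤ j ≤ k there exists ω' ∈ D with ω'(j) = a. -/
set_option linter.unusedSectionVars false
set_option linter.unusedVariables false

variable {α : Type*} [DecidableEq α]

/-- Preferences (linear orders written as lists, most preferred first) on `A`. -/
def PrefOn (A : Finset α) : Set (List α) :=
  {l | l.Nodup ∧ l.toFinset = A}

/-- Restriction of a preference to a subset `T`. -/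
def restrictPref (l : List α) (T : Finset α) : List α :=
  l.filter (fun a => decide (a ∈ T))

/-- Arrow's single-peaked domain on `A`: for every triple `T ⊆ A` some `x ∈ T`
is never ranked last in the restriction of the domain to `T`. -/
def IsASPD (A : Finset α) (D : Set (List α)) : Prop :=
  D ⊆ PrefOn A ∧
    ∀ T : Finset α, T ⊆ A → T.card = 3 →
      ∃ x ∈ T, ∀ l ∈ D, (restrictPref l T).getLast? ≠ some x

/-- Maximal Arrow's single-peaked domain on `A`. -/
def IsMaximalASPD (A : Finset α) (D : Set (List α)) : Prop :=
  IsASPD A D ∧ ∀ l ∈ PrefOn A, l ∉ D → ¬ IsASPD A (insert l D)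

private lemma filter_getLast_decomp {p : α → Bool} :
    ∀ {σ : List α} {v : α}, (σ.filter p).getLast? = some v →
      ∃ t1 t2, σ = t1 ++ v :: t2 ∧ p v = true ∧ ∀ z ∈ t2, ¬ p z = true := by
  intro σ
  induction σ using List.reverseRecOn with
  | nil => intro v h; simp at h
  | append_singleton xs z ih =>
    intro v h
    rw [List.filter_append] at h
    by_cases hz : p z
    · rw [show List.filter p [z] = [z] from by simp [hz]] at h
      rw [List.getLast?_concat] at h
      obtain rfl : z = v := by simpa using h
      exact ⟨xs, [], rfl, hz, by simp⟩
    · rw [show List.filter p [z] = ([] : List α) from by simp [hz], List.append_nil] at h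
      obtain ⟨t1, t2, rfl, hv, ht⟩ := ih h
      refine ⟨t1, t2 ++ [z], by simp, hv, ?_⟩
      intro z' hz'
      rcases List.mem_append.1 hz' with h' | h'
      · exact ht z' h'
      · obtain rfl : z' = z := by simpa using h'
        exact hz

private lemma indexOf_lt_of_left {t1 t2 : List α} {y v : α}
    (hnd : (t1 ++ v :: t2).Nodup) (hy : y ∈ t1) :
    (t1 ++ v :: t2).idxOf y < (t1 ++ v :: t2).idxOf v := by
  induction t1 with
  | nil => simp at hy
  | cons c t ih =>
    have hnd' : (t ++ v :: t2).Nodup := (List.nodup_cons.1 hnd).2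
    have hcnot : c ∉ t ++ v :: t2 := (List.nodup_cons.1 hnd).1
    have hvc : v ≠ c := by rintro rfl; exact hcnot (by simp)
    rcases List.mem_cons.1 hy with rfl | hy'
    · rw [List.cons_append, List.idxOf_cons_self, List.idxOf_cons_ne _ hvc.symm]
      omega
    · have hyc : c ≠ y := by rintro rfl; exact hcnot (by simp [hy'])
      rw [List.cons_append, List.idxOf_cons_ne _ hyc, List.idxOf_cons_ne _ hvc.symm]
      exact Nat.succ_lt_succ (ih hnd' hy')

/-- `e` is blocked (relative to domain `D` and the upper set `B`). -/
def Blocked (D : Set (List α)) (B : Finset α) (e : α) : Prop :=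
  ∃ T : Finset α, T ⊆ B ∧ T.card = 3 ∧ e ∈ T ∧
    ∀ x ∈ T.erase e, ∃ σ ∈ D, (restrictPref σ T).getLast? = some x

private lemma never_bottom {A : Finset α} {D : Set (List α)} (hasp : IsASPD A D)
    {U : Finset α} (hUA : U ⊆ A) (hUc : U.card = 3) {w : α} (hw : w ∈ U)
    (hbots : ∀ x ∈ U.erase w, ∃ σ ∈ D, (restrictPref σ U).getLast? = some x) :
    ∀ σ ∈ D, (restrictPref σ U).getLast? ≠ some w := by
  obtain ⟨x, hxU, hxnever⟩ := hasp.2 U hUA hUc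
  by_cases hxw : x = w
  · exact hxw ▸ hxnever
  · exfalso
    obtain ⟨σ, hσ, hb⟩ := hbots x (Finset.mem_erase.2 ⟨hxw, hxU⟩)
    exact hxnever σ hσ hb

private lemma exists_unblocked {A : Finset α} {D : Set (List α)} (hasp : IsASPD A D)
    {a : α} {Q s l : List α} (hlQ : l = Q ++ a :: s) (hl : l ∈ D) (hQne : Q ≠ []) :
    ∃ e ∈ Q, ¬ Blocked D (insert a Q.toFinset) e := by
  classical
  obtain ⟨hnd, hA⟩ := hasp.1 hl
  rw [hlQ] at hnd hA
  have hndQ : Q.Nodup := (List.nodup_append.1 hnd).1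
  have hdisj : Q.Disjoint (a :: s) := List.disjoint_of_nodup_append hnd
  have haQ : a ∉ Q := fun h => hdisj h (by simp)
  have haA : a ∈ A := by rw [← hA]; simp
  set B : Finset α := insert a Q.toFinset with hB
  have hBA : (B : Finset α) ⊆ A := by
    intro t ht
    rw [← hA]
    rcases Finset.mem_insert.1 ht with rfl | ht'
    · simp
    · simp [List.mem_toFinset.1 ht']
  by_contra hcon
  push_neg at hcon
  -- every element of Q is blocked
  have hQB : ∀ e ∈ Q, Blocked D B e := hcon
  -- step 1: the element b just above a
  set b := Q.getLast hQne with hb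
  have hbQ : b ∈ Q := List.getLast_mem hQne
  obtain ⟨T, hTB, hTc, hbT, hbots⟩ := hQB b hbQ
  have hbnever := never_bottom hasp (hTB.trans hBA) hTc hbT hbots
  have hab : a ≠ b := fun h => haQ (h ▸ hbQ)
  -- step 2: a ∈ T
  have haT : a ∈ T := by
    by_contra haT
    have hsT : ∀ t ∈ s, t ∉ T := by
      intro t hts htT
      rcases Finset.mem_insert.1 (hTB htT) with rfl | h'
      · exact haT htT
      · exact hdisj (List.mem_toFinset.1 h') (List.mem_cons_of_mem _ hts)
    have hbl : restrictPref l T = Q.dropLast.filter (fun x => decide (x ∈ T)) ++ [b] := by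
      rw [hlQ, restrictPref, List.filter_append]
      have h1 : (a :: s).filter (fun x => decide (x ∈ T)) = [] := by
        rw [List.filter_eq_nil_iff]
        intro t ht
        rcases List.mem_cons.1 ht with rfl | ht'
        · simp [haT]
        · simp [hsT t ht']
      rw [h1, List.append_nil]
      conv_lhs => rw [← List.dropLast_append_getLast hQne]
      rw [List.filter_append]
      congr 1
      simp [← hb, hbT]
    exact hbnever l hl (by rw [hbl, List.getLast?_concat])
  -- step 3: the third element v1
  have hv1ex : ((T.erase b).erase a).Nonempty := by
    rw [← Finset.card_pos, Finset.card_erase_of_mem (Finset.mem_erase.2 ⟨hab, haT⟩),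
      Finset.card_erase_of_mem hbT, hTc]
    omega
  obtain ⟨v1, hv1⟩ := hv1ex
  have hv1a : v1 ≠ a := (Finset.mem_erase.1 hv1).1
  have hv1b : v1 ≠ b := (Finset.mem_erase.1 (Finset.mem_of_mem_erase hv1)).1
  have hv1T : v1 ∈ T := Finset.mem_of_mem_erase (Finset.mem_of_mem_erase hv1)
  obtain ⟨σ1, hσ1D, hσ1bot⟩ := hbots v1 (Finset.mem_erase.2 ⟨hv1b, hv1T⟩)
  obtain ⟨ndσ1, hAσ1⟩ := hasp.1 hσ1D
  -- step 4 : a is above v1 in σ1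
  obtain ⟨t1, t2, hσ1eq, _, ht2⟩ := filter_getLast_decomp (p := fun x => decide (x ∈ T)) hσ1bot
  have haσ1 : a ∈ σ1 := by rw [← List.mem_toFinset, hAσ1]; exact haA
  have hat1 : a ∈ t1 := by
    rw [hσ1eq] at haσ1
    rcases List.mem_append.1 haσ1 with h' | h'
    · exact h'
    · rcases List.mem_cons.1 h' with h'' | h''
      · exact absurd h'' hv1a.symm
      · exact absurd (by simp [haT] : (fun x => decide (x ∈ T)) a = true) (ht2 a h'')
  have hidx_av1 : σ1.idxOf a < σ1.idxOf v1 := by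
    rw [hσ1eq]; exact indexOf_lt_of_left (hσ1eq ▸ ndσ1) hat1
  -- step 5: the set S and its maximum
  set S : Finset α := (B.erase a).filter (fun x => σ1.idxOf a < σ1.idxOf x) with hS
  have hv1S : v1 ∈ S := by
    rw [hS, Finset.mem_filter, Finset.mem_erase]
    exact ⟨⟨hv1a, hTB hv1T⟩, hidx_av1⟩
  obtain ⟨w, hwS, hwmax⟩ := S.exists_max_image (fun x => σ1.idxOf x) ⟨v1, hv1S⟩
  have hwB : w ∈ B.erase a := (Finset.mem_filter.1 hwS).1
  have hwa : w ≠ a := (Finset.mem_erase.1 hwB).1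
  have hwQ : w ∈ Q := by
    rcases Finset.mem_insert.1 (Finset.mem_erase.1 hwB).2 with h' | h'
    · exact absurd h' hwa
    · exact List.mem_toFinset.1 h'
  -- step 7/8
  obtain ⟨U, hUB, hUc, hwU, hUbots⟩ := hQB w hwQ
  have hwnever := never_bottom hasp (hUB.trans hBA) hUc hwU hUbots
  have hwσ1 : w ∈ σ1 := by
    rw [← List.mem_toFinset, hAσ1]
    exact hBA (Finset.mem_erase.1 hwB).2
  have hfne : restrictPref σ1 U ≠ [] := by
    refine List.ne_nil_of_mem (a := w) ?_
    rw [restrictPref, List.mem_filter]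
    exact ⟨hwσ1, by simp [hwU]⟩
  obtain ⟨w', hw'⟩ : ∃ w', (restrictPref σ1 U).getLast? = some w' :=
    ⟨_, List.getLast?_eq_getLast_of_ne_nil hfne⟩
  have hw'w : w' ≠ w := by
    rintro rfl
    exact hwnever σ1 hσ1D hw'
  obtain ⟨u1, u2, hσ1eq', hw'U, hu2⟩ := filter_getLast_decomp (p := fun x => decide (x ∈ U)) hw'
  have hw'Umem : w' ∈ U := by simpa using hw'U
  have hwu1 : w ∈ u1 := by
    rw [hσ1eq'] at hwσ1
    rcases List.mem_append.1 hwσ1 with h' | h'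
    · exact h'
    · rcases List.mem_cons.1 h' with h'' | h''
      · exact absurd h''.symm hw'w
      · exact absurd (by simp [hwU] : (fun x => decide (x ∈ U)) w = true) (hu2 w h'')
  have hidx_ww' : σ1.idxOf w < σ1.idxOf w' := by
    rw [hσ1eq']; exact indexOf_lt_of_left (hσ1eq' ▸ ndσ1) hwu1
  have hidx_aw : σ1.idxOf a < σ1.idxOf w := (Finset.mem_filter.1 hwS).2
  have hw'S : w' ∈ S := by
    rw [hS, Finset.mem_filter, Finset.mem_erase]
    refine ⟨⟨?_, hUB hw'Umem⟩, by omega⟩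
    rintro rfl
    omega
  have := hwmax w' hw'S
  omega


private lemma key {A : Finset α} {D : Set (List α)} (hD : IsMaximalASPD A D)
    {a : α} {l : List α} (hl : l ∈ D) {p : ℕ} (hp : l[p+1]? = some a) :
    ∃ l' ∈ D, l'[p]? = some a := by
  classical
  obtain ⟨hnd, hA⟩ := hD.1.1 hl
  have hlen : p + 1 < l.length := by
    rcases List.getElem?_eq_some_iff.1 hp with ⟨h, _⟩; exact h
  have hgetl : l[p+1]'hlen = a := by
    have h2 := hp
    rw [List.getElem?_eq_getElem hlen] at h2
    simpa using h2
  set Q := l.take (p+1) with hQ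
  set s := l.drop (p+2) with hs
  have hQlen : Q.length = p + 1 := by rw [hQ, List.length_take]; omega
  have hlQ : l = Q ++ a :: s := by
    conv_lhs => rw [← List.take_append_drop (p+1) l]
    congr 1
    rw [List.drop_eq_getElem_cons hlen, hgetl]
  have hQne : Q ≠ [] := by
    intro h; rw [h] at hQlen; simp at hQlen
  obtain ⟨e, heQ, hne⟩ := exists_unblocked hD.1 hlQ hl hQne
  obtain ⟨Q1, Q2, hQdec⟩ := List.append_of_mem heQ
  set τ : List α := (Q1 ++ Q2) ++ a :: e :: s with hτ
  have hperm : List.Perm l τ := by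
    rw [hlQ, hQdec]
    have h1 : List.Perm (e :: (Q2 ++ a :: s)) ((Q2 ++ [a]) ++ e :: s) := by
      have h0 := List.perm_middle (a := e) (l₁ := Q2 ++ [a]) (l₂ := s)
      simpa using h0.symm
    have h2 : Q1 ++ e :: Q2 ++ a :: s = Q1 ++ (e :: (Q2 ++ a :: s)) := by simp
    have h3 : τ = Q1 ++ ((Q2 ++ [a]) ++ e :: s) := by simp [hτ]
    rw [h2, h3]
    exact List.Perm.append_left _ h1
  have hτnd : τ.Nodup := hperm.nodup_iff.1 hnd
  have hτA : τ.toFinset = A := (List.toFinset_eq_of_perm _ _ hperm).symm.trans hA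
  have hτPref : τ ∈ PrefOn A := ⟨hτnd, hτA⟩
  have hl12 : (Q1 ++ Q2).length = p := by
    have := hQlen
    rw [hQdec] at this
    simp only [List.length_append, List.length_cons] at this ⊢
    omega
  have hτget : τ[p]? = some a := by
    rw [hτ, List.getElem?_append_right (by omega : (Q1 ++ Q2).length ≤ p), hl12]
    simp
  by_cases hτD : τ ∈ D
  · exact ⟨τ, hτD, hτget⟩
  · exfalso
    refine hD.2 τ hτPref hτD ?_
    refine ⟨Set.insert_subset hτPref hD.1.1, ?_⟩
    intro T hTA hTc
    have transfer : (restrictPref τ T).getLast? = (restrictPref l T).getLast? →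
        ∃ x ∈ T, ∀ σ ∈ insert τ D, (restrictPref σ T).getLast? ≠ some x := by
      intro heq
      obtain ⟨x, hxT, hxnever⟩ := hD.1.2 T hTA hTc
      refine ⟨x, hxT, ?_⟩
      intro σ hσ
      rcases hσ with rfl | hσD
      · rw [heq]; exact hxnever l hl
      · exact hxnever σ hσD
    by_cases heT : e ∈ T
    · by_cases hsT : s.filter (fun x => decide (x ∈ T)) = []
      · -- moved element becomes the bottom; use unblockedness
        have hτbot : (restrictPref τ T).getLast? = some e := by
          have hform : restrictPref τ T
              = (Q1 ++ Q2 ++ [a]).filter (fun x => decide (x ∈ T)) ++ [e] := by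
            rw [restrictPref, show τ = (Q1 ++ Q2 ++ [a]) ++ e :: s from by simp [hτ],
              List.filter_append, List.filter_cons]
            simp [heT, hsT]
          rw [hform, List.getLast?_concat]
        have hTB : T ⊆ insert a Q.toFinset := by
          intro t htT
          have htl : t ∈ l := List.mem_toFinset.1 (hA ▸ hTA htT)
          rw [hlQ] at htl
          rcases List.mem_append.1 htl with h' | h'
          · exact Finset.mem_insert.2 (Or.inr (List.mem_toFinset.2 h'))
          · rcases List.mem_cons.1 h' with rfl | h''
            · exact Finset.mem_insert_self _ _
            · exact absurd hsT
                (List.ne_nil_of_mem (List.mem_filter.2 ⟨h'', by simp [htT]⟩))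
        have hwit : ∃ x ∈ T.erase e, ∀ σ ∈ D, (restrictPref σ T).getLast? ≠ some x := by
          by_contra h2
          push_neg at h2
          exact hne ⟨T, hTB, hTc, heT, fun x hx => h2 x hx⟩
        obtain ⟨x, hxe, hxnever⟩ := hwit
        refine ⟨x, Finset.mem_of_mem_erase hxe, ?_⟩
        intro σ hσ
        rcases hσ with rfl | hσD
        · rw [hτbot]
          intro hcon
          exact (Finset.ne_of_mem_erase hxe) (by injection hcon.symm)
        · exact hxnever σ hσD
      · -- common nonempty suffix: bottoms agree
        refine transfer ?_
        have h1 : (restrictPref l T).getLast?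
            = (s.filter (fun x => decide (x ∈ T))).getLast? := by
          rw [restrictPref, show l = (Q1 ++ e :: Q2 ++ [a]) ++ s from by
              rw [hlQ, hQdec]; simp, List.filter_append]
          exact List.getLast?_append_of_ne_nil _ hsT
        have h2 : (restrictPref τ T).getLast?
            = (s.filter (fun x => decide (x ∈ T))).getLast? := by
          rw [restrictPref, show τ = (Q1 ++ Q2 ++ [a] ++ [e]) ++ s from by
              simp [hτ], List.filter_append]
          exact List.getLast?_append_of_ne_nil _ hsT
        rw [h1, h2]
    · -- e ∉ T: restrictions are identical
      refine transfer ?_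
      have : restrictPref τ T = restrictPref l T := by
        rw [restrictPref, restrictPref, show τ = (Q1 ++ Q2) ++ a :: e :: s from hτ,
          show l = Q1 ++ e :: (Q2 ++ a :: s) from by rw [hlQ, hQdec]; simp]
        simp [List.filter_append, List.filter_cons, heT]
      rw [this]


/-- If an alternative appears at (0-based) position `k` in some preference of a
maximal Arrow's single-peaked domain, then it also appears at every earlier
position `j ≤ k` in some preference of the domain. -/
theorem maximal_aspd_higher_ranking (A : Finset α) (D : Set (List α))
    (hD : IsMaximalASPD A D) (a : α) (l : List α) (hl : l ∈ D)
    (k : ℕ) (hk : l[k]? = some a) :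
    ∀ j ≤ k, ∃ l' ∈ D, l'[j]? = some a := by

  have main : ∀ d j, j + d = k → ∃ l' ∈ D, l'[j]? = some a := by
    intro d
    induction d with
    | zero => intro j hj; exact ⟨l, hl, by rw [show j = k from by omega]; exact hk⟩
    | succ n ih =>
      intro j hj
      obtain ⟨l', hl', hg⟩ := ih (j+1) (by omega)
      exact key hD hl' hg
  intro j hj
  exact main (k - j) j (by omega)
end

section
/- Let D be a maximal ASPD on a finite set A with n = |A| and let V := {{ω(1),…,ω(k)} : ω ∈ D, 1 ≤ k ≤ n} be the regular vine corresponding to D. Then rich(D) = min{k ∈ {1,…,n} : ⋂_{S ∈ V, |S| = k} S ≠ ∅}. -/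
variable {α : Type*} [DecidableEq α]

/-- The family of initial segments of the preferences of a domain: the regular
vine corresponding to a maximal Arrow's single-peaked domain. -/
def prefixFamily (D : Set (List α)) : Set (Finset α) :=
  {S | ∃ l ∈ D, ∃ k : ℕ, 1 ≤ k ∧ k ≤ l.length ∧ S = (l.take k).toFinset}

/-- `D` is `k`-rich: every alternative appears at each of the first `k`
(1-based) positions in some preference of `D`. -/
def IsKRich (A : Finset α) (D : Set (List α)) (k : ℕ) : Prop :=
  ∀ j : ℕ, 1 ≤ j → j ≤ k → ∀ a ∈ A, ∃ l ∈ D, l[j - 1]? = some a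

/-! ### Auxiliary lemmas -/

section Aux

lemma restrict_append (l₁ l₂ : List α) (T : Finset α) :
    restrictPref (l₁ ++ l₂) T = restrictPref l₁ T ++ restrictPref l₂ T := by
  simp [restrictPref]

lemma mem_restrict {a : α} {l : List α} {T : Finset α} :
    a ∈ restrictPref l T ↔ a ∈ l ∧ a ∈ T := by
  simp [restrictPref]

lemma restrict_nodup {l : List α} (h : l.Nodup) (T : Finset α) :
    (restrictPref l T).Nodup := h.filter _

lemma restrict_toFinset (l : List α) (T : Finset α) :
    (restrictPref l T).toFinset = l.toFinset ∩ T := by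
  ext a; simp [restrictPref]

lemma restrict_restrict (l : List α) {T S : Finset α} (hTS : T ⊆ S) :
    restrictPref (restrictPref l S) T = restrictPref l T := by
  simp only [restrictPref, List.filter_filter]
  apply List.filter_congr
  intro a _
  by_cases h : a ∈ T
  · simp [h, hTS h]
  · simp [h]

lemma restrict_concat_of_mem {x : α} {T : Finset α} (hx : x ∈ T) (l : List α) :
    restrictPref (l ++ [x]) T = restrictPref l T ++ [x] := by
  simp [restrict_append, restrictPref, hx]

lemma restrict_concat_of_not_mem {x : α} {T : Finset α} (hx : x ∉ T) (l : List α) :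
    restrictPref (l ++ [x]) T = restrictPref l T := by
  simp [restrict_append, restrictPref, hx]

/-- Last of restriction of a list ending in `x ∈ T` is `x`. -/
lemma getLast?_restrict_concat {x : α} {T : Finset α} (hx : x ∈ T) (l : List α) :
    (restrictPref (l ++ [x]) T).getLast? = some x := by
  rw [restrict_concat_of_mem hx, List.getLast?_concat]

/-- Any member of `D` ending in `x` has restriction-last `x` on triples containing `x`. -/
lemma getLast?_restrict_of_getLast? {l : List α} {x : α} (h : l.getLast? = some x)
    {T : Finset α} (hx : x ∈ T) : (restrictPref l T).getLast? = some x := by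
  have hne : l ≠ [] := by rintro rfl; simp at h
  have hgl : l.getLast hne = x := by
    have h2 := List.getLast?_eq_getLast hne
    rw [h2] at h; exact Option.some.inj h
  have : l = l.dropLast ++ [x] := by
    conv_lhs => rw [← List.dropLast_append_getLast hne, hgl]
  rw [this]
  exact getLast?_restrict_concat hx _

end Aux

section Basic

variable {A : Finset α} {D : Set (List α)}

lemma length_of_mem_PrefOn {l : List α} (h : l ∈ PrefOn A) : l.length = A.card := by
  obtain ⟨hn, hf⟩ := h
  rw [← hf, List.toFinset_card_of_nodup hn]

lemma restrict_length {l : List α} (h : l ∈ PrefOn A) {T : Finset α} (hT : T ⊆ A) :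
    (restrictPref l T).length = T.card := by
  obtain ⟨hn, hf⟩ := h
  rw [← List.toFinset_card_of_nodup (restrict_nodup hn T), restrict_toFinset, hf,
    Finset.inter_eq_right.mpr hT]

/-- The restriction to a nonempty `T ⊆ A` has a last element, which lies in `T`. -/
lemma exists_getLast?_restrict {l : List α} (h : l ∈ PrefOn A) {T : Finset α} (hT : T ⊆ A)
    (hcard : 0 < T.card) : ∃ z ∈ T, (restrictPref l T).getLast? = some z := by
  have hlen : (restrictPref l T).length = T.card := restrict_length h hT
  have hne : restrictPref l T ≠ [] := by
    intro he; rw [he] at hlen; simp at hlen; omega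
  refine ⟨(restrictPref l T).getLast hne, ?_, (List.getLast?_eq_getLast hne)⟩
  have := List.getLast_mem hne
  exact (mem_restrict.mp this).2

/-- A singleton domain is an ASPD. -/
lemma singleton_isASPD {A : Finset α} {l : List α} (h : l ∈ PrefOn A) : IsASPD A {l} := by
  constructor
  · intro m hm; rw [Set.mem_singleton_iff] at hm; rwa [hm]
  · intro T hT hcard
    have hlen : (restrictPref l T).length = 3 := by rw [restrict_length h hT, hcard]
    obtain ⟨a, b, c, habc⟩ := List.length_eq_three.mp hlen
    have hnod : (restrictPref l T).Nodup := restrict_nodup h.1 T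
    have haT : a ∈ T := by
      have : a ∈ restrictPref l T := by rw [habc]; simp
      exact (mem_restrict.mp this).2
    refine ⟨a, haT, ?_⟩
    intro m hm'; rw [Set.mem_singleton_iff] at hm'; subst hm'
    rw [habc]
    simp only [List.getLast?]
    intro he
    have : c = a := by simpa using he
    subst this
    rw [habc] at hnod
    simp at hnod

end Basic

section MaxBasic

variable {A : Finset α} {D : Set (List α)}

lemma mem_PrefOn_of_mem (hD : IsMaximalASPD A D) {l : List α} (hl : l ∈ D) : l ∈ PrefOn A :=
  hD.1.1 hl

lemma nonempty_of_max (hD : IsMaximalASPD A D) : D.Nonempty := by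
  by_contra hne
  rw [Set.not_nonempty_iff_eq_empty] at hne
  subst hne
  have hl : (A.toList : List α) ∈ PrefOn A := ⟨A.nodup_toList, A.toList_toFinset⟩
  have := hD.2 A.toList hl (by simp)
  apply this
  have : (insert A.toList (∅ : Set (List α))) = {A.toList} := by simp
  rw [this]
  exact singleton_isASPD hl

/-- Closure property of maximal ASPDs: an order all of whose triple-restriction
last elements are realized in `D` belongs to `D`. -/
lemma mem_of_consistent (hD : IsMaximalASPD A D) {l : List α} (hl : l ∈ PrefOn A)
    (h : ∀ T : Finset α, T ⊆ A → T.card = 3 →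
      ∃ l' ∈ D, (restrictPref l' T).getLast? = (restrictPref l T).getLast?) : l ∈ D := by
  by_contra hnotD
  apply hD.2 l hl hnotD
  constructor
  · intro m hm
    rcases hm with rfl | hm
    · exact hl
    · exact hD.1.1 hm
  · intro T hT hcard
    obtain ⟨x, hxT, hx⟩ := hD.1.2 T hT hcard
    refine ⟨x, hxT, ?_⟩
    intro m hm
    rcases hm with rfl | hm
    · obtain ⟨l', hl', he⟩ := h T hT hcard
      rw [← he]
      exact hx l' hl'
    · exact hx m hm

end MaxBasic

section TwoLasts

variable {A : Finset α} {D : Set (List α)}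

/-- In a maximal ASPD on at least two alternatives, not every order ends with
the same element. -/
lemma not_all_same_last (hD : IsMaximalASPD A D) (hcard : 2 ≤ A.card) (x : α)
    (hall : ∀ l ∈ D, l.getLast? = some x) : False := by
  obtain ⟨l0, hl0⟩ := nonempty_of_max hD
  have hPref0 := mem_PrefOn_of_mem hD hl0
  have hlen : l0.length = A.card := length_of_mem_PrefOn hPref0
  have hne0 : l0 ≠ [] := by
    intro h; rw [h] at hlen; simp at hlen; omega
  have hlx : l0.getLast? = some x := hall l0 hl0
  have hgl : l0.getLast hne0 = x := by
    have h2 := List.getLast?_eq_getLast hne0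
    rw [h2] at hlx; exact Option.some.inj hlx
  set w := l0.dropLast with hw
  have hsplit0 : w ++ [x] = l0 := by
    rw [← hgl, hw]; exact List.dropLast_append_getLast hne0
  have hwne : w ≠ [] := by
    intro h
    have : l0.length = 1 := by rw [← hsplit0, h]; simp
    omega
  set u := w.getLast hwne with hu
  have hsplitw : w.dropLast ++ [u] = w := List.dropLast_append_getLast hwne
  set v := w.dropLast with hv
  have hsplit : l0 = v ++ [u, x] := by
    rw [← hsplit0, ← hsplitw]; simp
  set lstar := v ++ [x, u] with hlstar
  have hperm : l0.Perm lstar := by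
    rw [hsplit, hlstar]
    exact (List.Perm.swap x u []).append_left v
  have hnodup0 : l0.Nodup := hPref0.1
  have huw : u ∈ w := List.getLast_mem hwne
  have hxnw : x ∉ w := by
    have : (w ++ [x]).Nodup := by rw [hsplit0]; exact hnodup0
    have := List.disjoint_of_nodup_append this
    intro hxw; exact this hxw (by simp)
  have hune : u ≠ x := fun h => hxnw (h ▸ huw)
  have hPrefstar : lstar ∈ PrefOn A := by
    refine ⟨hperm.nodup_iff.mp hnodup0, ?_⟩
    rw [← List.toFinset_eq_of_perm _ _ hperm]
    exact hPref0.2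
  have hlaststar : lstar.getLast? = some u := by
    have : lstar = (v ++ [x]) ++ [u] := by rw [hlstar]; simp
    rw [this, List.getLast?_concat]
  have hstar_not : lstar ∉ D := by
    intro h
    have := hall lstar h
    rw [hlaststar] at this
    exact hune (Option.some.inj this)
  have hnot := hD.2 lstar hPrefstar hstar_not
  rw [IsASPD] at hnot
  push_neg at hnot
  have hsub : insert lstar D ⊆ PrefOn A := by
    intro m hm
    rcases hm with rfl | hm
    · exact hPrefstar
    · exact hD.1.1 hm
  obtain ⟨T, hTA, hT3, hfail⟩ := hnot hsub
  by_cases hmem : u ∈ T ∧ x ∈ T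
  · -- pick z ∈ T distinct from x and u
    have hz : (T \ {x, u}).Nonempty := by
      have h1 : ({x, u} : Finset α).card ≤ 2 := by
        apply le_trans (Finset.card_insert_le _ _); simp
      have h2 : T.card - ({x, u} : Finset α).card ≤ (T \ ({x, u} : Finset α)).card :=
        Finset.le_card_sdiff _ _
      rw [← Finset.card_pos]
      omega
    obtain ⟨z, hzT⟩ := hz
    rw [Finset.mem_sdiff] at hzT
    obtain ⟨hzT, hznot⟩ := hzT
    have hzx : z ≠ x := fun h => hznot (by simp [h])
    have hzu : z ≠ u := fun h => hznot (by simp [h])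
    obtain ⟨m, hm, hml⟩ := hfail z hzT
    rcases hm with rfl | hm
    · rw [getLast?_restrict_of_getLast? hlaststar hmem.1] at hml
      exact hzu (Option.some.inj hml).symm
    · rw [getLast?_restrict_of_getLast? (hall m hm) hmem.2] at hml
      exact hzx (Option.some.inj hml).symm
  · -- the restrictions of l0 and lstar to T agree
    have hrestr : restrictPref lstar T = restrictPref l0 T := by
      rw [hsplit, hlstar, restrict_append, restrict_append]
      congr 1
      rw [not_and_or] at hmem
      rcases hmem with hu' | hx'
      · by_cases hxT : x ∈ T <;> simp [restrictPref, hu', hxT]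
      · by_cases huT : u ∈ T <;> simp [restrictPref, hx', huT]
    obtain ⟨z0, hz0T, hz0⟩ := hD.1.2 T hTA hT3
    obtain ⟨m, hm, hml⟩ := hfail z0 hz0T
    rcases hm with rfl | hm
    · rw [hrestr] at hml
      exact hz0 l0 hl0 hml
    · exact hz0 m hm hml

end TwoLasts

section Restrict

variable {A : Finset α} {D : Set (List α)}

lemma eq_dropLast_concat {l : List α} {x : α} (h : l.getLast? = some x) :
    l = l.dropLast ++ [x] := by
  have hne : l ≠ [] := by rintro rfl; simp at h
  have hgl : l.getLast hne = x := by
    have h2 := List.getLast?_eq_getLast hne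
    rw [h2] at h; exact Option.some.inj h
  conv_lhs => rw [← List.dropLast_append_getLast hne, hgl]

lemma mem_of_getLast?_eq {l : List α} {x : α} (h : l.getLast? = some x) : x ∈ l := by
  rw [eq_dropLast_concat h]; simp

lemma pref_of_concat {w : List α} {x : α} (h : w ++ [x] ∈ PrefOn A) :
    w ∈ PrefOn (A.erase x) := by
  obtain ⟨hn, hf⟩ := h
  rw [List.nodup_append] at hn
  obtain ⟨hnw, -, hdisj⟩ := hn
  have hxw : x ∉ w := fun hx => by simpa using hdisj x hx x (by simp)
  refine ⟨hnw, ?_⟩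
  ext a
  simp only [Finset.mem_erase, List.mem_toFinset]
  constructor
  · intro ha
    refine ⟨fun he => hxw (he ▸ ha), ?_⟩
    rw [← hf]; simp [ha]
  · rintro ⟨hax, haA⟩
    rw [← hf] at haA
    simp only [List.toFinset_append, Finset.mem_union, List.mem_toFinset] at haA
    rcases haA with h | h
    · exact h
    · simp at h; exact absurd h hax

lemma concat_pref {w : List α} {x : α} (hx : x ∈ A) (h : w ∈ PrefOn (A.erase x)) :
    w ++ [x] ∈ PrefOn A := by
  obtain ⟨hn, hf⟩ := h
  have hxw : x ∉ w := by
    intro hmem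
    have : x ∈ A.erase x := by rw [← hf]; simpa using hmem
    simp at this
  constructor
  · rw [List.nodup_append]
    exact ⟨hn, List.nodup_singleton x, by intro a ha b hb; simp at hb; subst hb; rintro rfl; exact hxw ha⟩
  · rw [List.toFinset_append, hf]
    ext a
    simp only [Finset.mem_union, Finset.mem_erase, List.toFinset_cons, List.toFinset_nil,
      insert_empty_eq, Finset.mem_singleton]
    constructor
    · rintro (⟨-, h⟩ | rfl) <;> [exact h; exact hx]
    · intro ha
      by_cases he : a = x
      · right; exact he
      · left; exact ⟨he, ha⟩

/-- Every element of `D` yields, by restriction to `A.erase x` and re-appending `x`,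
another element of `D` (for `x` a realized last). -/
lemma restrict_concat_mem (hD : IsMaximalASPD A D) {x : α} {lx : List α} (hlx : lx ∈ D)
    (hlast : lx.getLast? = some x) {l : List α} (hl : l ∈ D) :
    restrictPref l (A.erase x) ++ [x] ∈ D := by
  have hxA : x ∈ A := by
    have := mem_of_getLast?_eq hlast
    rw [← (mem_PrefOn_of_mem hD hlx).2]
    simpa using this
  have hlP := mem_PrefOn_of_mem hD hl
  set w := restrictPref l (A.erase x) with hw
  have hwP : w ∈ PrefOn (A.erase x) := by
    refine ⟨restrict_nodup hlP.1 _, ?_⟩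
    rw [restrict_toFinset, hlP.2, Finset.inter_eq_right.mpr (Finset.erase_subset _ _)]
  apply mem_of_consistent hD (concat_pref hxA hwP)
  intro T hT h3
  by_cases hxT : x ∈ T
  · refine ⟨lx, hlx, ?_⟩
    rw [getLast?_restrict_of_getLast? hlast hxT, getLast?_restrict_concat hxT]
  · refine ⟨l, hl, ?_⟩
    rw [restrict_concat_of_not_mem hxT]
    have hTsub : T ⊆ A.erase x := fun a ha =>
      Finset.mem_erase.mpr ⟨fun he => hxT (he ▸ ha), hT ha⟩
    rw [hw, restrict_restrict _ hTsub]

/-- The restriction of a maximal ASPD by a realized last element is again a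
maximal ASPD. -/
lemma restrict_isMaximalASPD (hD : IsMaximalASPD A D) {x : α} {lx : List α} (hlx : lx ∈ D)
    (hlast : lx.getLast? = some x) :
    IsMaximalASPD (A.erase x) {w : List α | w ++ [x] ∈ D} := by
  have hxA : x ∈ A := by
    have := mem_of_getLast?_eq hlast
    rw [← (mem_PrefOn_of_mem hD hlx).2]
    simpa using this
  set Dx : Set (List α) := {w : List α | w ++ [x] ∈ D} with hDx
  have hsub : Dx ⊆ PrefOn (A.erase x) := fun w hw => pref_of_concat (mem_PrefOn_of_mem hD hw)
  have hrmem : ∀ l ∈ D, restrictPref l (A.erase x) ∈ Dx := fun l hl =>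
    restrict_concat_mem hD hlx hlast hl
  have hrlast : ∀ (l : List α) (T : Finset α), T ⊆ A.erase x →
      restrictPref (restrictPref l (A.erase x)) T = restrictPref l T := fun l T hT =>
    restrict_restrict _ hT
  constructor
  · constructor
    · exact hsub
    · intro T hT h3
      obtain ⟨z, hzT, hz⟩ := hD.1.2 T (hT.trans (Finset.erase_subset _ _)) h3
      refine ⟨z, hzT, ?_⟩
      intro w hw
      have hxT : x ∉ T := fun hmem => by simpa using hT hmem
      rw [← restrict_concat_of_not_mem hxT w]
      exact hz _ hw
  · intro w hwP hwD hasp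
    -- push the new order up to `A` and contradict maximality of `D`
    have hwxP : w ++ [x] ∈ PrefOn A := concat_pref hxA hwP
    have hwxD : w ++ [x] ∉ D := hwD
    apply hD.2 _ hwxP hwxD
    constructor
    · intro m hm
      rcases hm with rfl | hm
      · exact hwxP
      · exact hD.1.1 hm
    · intro T hT h3
      by_cases hxT : x ∈ T
      · obtain ⟨z, hzT, hz⟩ := hD.1.2 T hT h3
        have hzx : z ≠ x := by
          intro he; subst he
          exact hz lx hlx (getLast?_restrict_of_getLast? hlast hxT)
        refine ⟨z, hzT, ?_⟩
        intro m hm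
        rcases hm with rfl | hm
        · rw [getLast?_restrict_concat hxT]
          exact fun he => hzx (Option.some.inj he).symm
        · exact hz m hm
      · have hTsub : T ⊆ A.erase x := fun a ha =>
          Finset.mem_erase.mpr ⟨fun he => hxT (he ▸ ha), hT ha⟩
        obtain ⟨z, hzT, hz⟩ := hasp.2 T hTsub h3
        refine ⟨z, hzT, ?_⟩
        intro m hm
        rcases hm with rfl | hm
        · rw [restrict_concat_of_not_mem hxT]
          exact hz w (Set.mem_insert _ _)
        · rw [← hrlast m T hTsub]
          exact hz _ (Set.mem_insert_of_mem _ (hrmem m hm))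

end Restrict

section DownStep

/-- If some alternative occurs at (0-based) position `j+1` in a maximal ASPD,
it also occurs at position `j`. -/
lemma achieves_downstep (n : ℕ) : ∀ (A : Finset α) (D : Set (List α)),
    IsMaximalASPD A D → A.card = n → ∀ (a : α) (j : ℕ),
    (∃ l ∈ D, l[j + 1]? = some a) → ∃ l ∈ D, l[j]? = some a := by
  induction n with
  | zero =>
    intro A D hD hcard a j ⟨l, hl, hget⟩
    have hlen : l.length = 0 := by rw [length_of_mem_PrefOn (mem_PrefOn_of_mem hD hl), hcard]
    rw [List.getElem?_eq_none (by omega)] at hget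
    exact absurd hget (by simp)
  | succ n ih =>
    intro A D hD hcard a j ⟨l, hl, hget⟩
    have hlP := mem_PrefOn_of_mem hD hl
    have hlen : l.length = n + 1 := by rw [length_of_mem_PrefOn hlP, hcard]
    have hjlt : j + 1 < l.length := by
      obtain ⟨h, -⟩ := List.getElem?_eq_some_iff.mp hget
      exact h
    have hne : l ≠ [] := by intro h; rw [h] at hlen; simp at hlen
    have haA : a ∈ A := by
      rw [← hlP.2, List.mem_toFinset]
      exact List.mem_of_getElem? hget
    by_cases hcase : j + 2 < l.length
    · -- `a` is not the last element of `l`: recurse in the restricted domain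
      set x := l.getLast hne with hx
      have hlastx : l.getLast? = some x := List.getLast?_eq_getLast hne
      have hxA : x ∈ A := by
        rw [← hlP.2, List.mem_toFinset]
        exact mem_of_getLast?_eq hlastx
      have hsplit : l.dropLast ++ [x] = l := List.dropLast_append_getLast hne
      have hDx := restrict_isMaximalASPD hD hl hlastx
      have hcard' : (A.erase x).card = n := by
        rw [Finset.card_erase_of_mem hxA, hcard]; omega
      have hwlen : l.dropLast.length = n := by
        rw [List.length_dropLast, hlen]; omega
      have hwget : l.dropLast[j + 1]? = some a := by
        have h1 : (l.dropLast ++ [x])[j + 1]? = l.dropLast[j + 1]? :=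
          List.getElem?_append_left (by rw [List.length_dropLast]; omega)
        rw [hsplit] at h1
        rw [← h1]; exact hget
      have hwDx : l.dropLast ∈ {w : List α | w ++ [x] ∈ D} := by
        simp only [Set.mem_setOf_eq, hsplit]; exact hl
      obtain ⟨w2, hw2, hg⟩ := ih (A.erase x) _ hDx hcard' a j ⟨l.dropLast, hwDx, hwget⟩
      refine ⟨w2 ++ [x], hw2, ?_⟩
      obtain ⟨hjw2, -⟩ := List.getElem?_eq_some_iff.mp hg
      rw [List.getElem?_append_left hjw2, hg]
    · -- `a` is the last element of `l`: switch to a preference with a different last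
      have hj2 : j + 2 = l.length := by omega
      have hlasta : l.getLast? = some a := by
        rw [List.getLast?_eq_getElem?, ← hget]
        congr 1
        omega
      have h2card : 2 ≤ A.card := by omega
      have hnotall : ¬ ∀ m ∈ D, m.getLast? = some a := fun hall =>
        not_all_same_last hD h2card a hall
      push_neg at hnotall
      obtain ⟨l', hl', hne'⟩ := hnotall
      have hl'P := mem_PrefOn_of_mem hD hl'
      have hl'len : l'.length = n + 1 := by rw [length_of_mem_PrefOn hl'P, hcard]
      have hne'nil : l' ≠ [] := by intro h; rw [h] at hl'len; simp at hl'len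
      set y := l'.getLast hne'nil with hy
      have hlasty : l'.getLast? = some y := List.getLast?_eq_getLast hne'nil
      have hya : y ≠ a := by
        intro h; rw [h] at hlasty; exact hne' hlasty
      set w := restrictPref l (A.erase y) with hw
      have hwmem : w ++ [y] ∈ D := restrict_concat_mem hD hl' hlasty hl
      have haey : a ∈ A.erase y := Finset.mem_erase.mpr ⟨hya.symm, haA⟩
      have hwlast : w.getLast? = some a := getLast?_restrict_of_getLast? hlasta haey
      have hyA : y ∈ A := by
        rw [← hl'P.2, List.mem_toFinset]
        exact mem_of_getLast?_eq hlasty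
      have hwlen : w.length = n := by
        rw [hw, restrict_length hlP (Finset.erase_subset _ _), Finset.card_erase_of_mem hyA,
          hcard]; omega
      have hjn : j = n - 1 := by omega
      have hwget : w[j]? = some a := by
        have h1 : w.getLast? = w[j]? := by
          rw [List.getLast?_eq_getElem?, hwlen, ← hjn]
        rw [← h1]; exact hwlast
      refine ⟨w ++ [y], hwmem, ?_⟩
      rw [List.getElem?_append_left (by omega), hwget]

end DownStep

section Assembly

variable {A : Finset α} {D : Set (List α)}

lemma achieves_of_le (hD : IsMaximalASPD A D) (a : α) :
    ∀ j : ℕ, (∃ l ∈ D, l[j]? = some a) → ∀ i, i ≤ j → ∃ l ∈ D, l[i]? = some a := by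
  intro j
  induction j with
  | zero =>
    intro h i hi
    have : i = 0 := by omega
    rwa [this]
  | succ j ihj =>
    intro h i hi
    rcases Nat.eq_or_lt_of_le hi with rfl | hlt
    · exact h
    · exact ihj (achieves_downstep A.card A D hD rfl a j h) i (by omega)

lemma mem_take_iff {l : List α} {x : α} {k : ℕ} :
    x ∈ l.take k ↔ ∃ j, j < k ∧ l[j]? = some x := by
  constructor
  · intro h
    obtain ⟨n, hn⟩ := List.mem_iff_getElem?.mp h
    have hlt : n < (l.take k).length := (List.getElem?_eq_some_iff.mp hn).1
    rw [List.length_take] at hlt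
    have hnk : n < k := lt_of_lt_of_le hlt (min_le_left _ _)
    exact ⟨n, hnk, by rw [← List.getElem?_take_of_lt hnk]; exact hn⟩
  · rintro ⟨j, hjk, hj⟩
    have : (l.take k)[j]? = some x := by rw [List.getElem?_take_of_lt hjk]; exact hj
    exact List.mem_of_getElem? this

end Assembly

/-- The richness of a maximal Arrow's single-peaked domain (the largest `k`
such that the domain is `k`-rich) equals the least `k` such that the rank-`k`
elements of the corresponding regular vine have a common element. -/
theorem richness_eq_vine_intersection (A : Finset α) (D : Set (List α))
    (hD : IsMaximalASPD A D) :
    sSup {k : ℕ | IsKRich A D k} =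
      sInf {k : ℕ | 1 ≤ k ∧ k ≤ A.card ∧
        ∃ x : α, ∀ S ∈ prefixFamily D, S.card = k → x ∈ S} := by
  classical
  obtain ⟨l0, hl0⟩ := nonempty_of_max hD
  have hl0P := mem_PrefOn_of_mem hD hl0
  by_cases hA0 : A.card = 0
  · -- empty ground set
    have hAe : A = ∅ := Finset.card_eq_zero.mp hA0
    have hL : {k : ℕ | IsKRich A D k} = Set.univ := by
      ext k
      simp only [Set.mem_setOf_eq, Set.mem_univ, iff_true]
      intro j _ _ a ha
      rw [hAe] at ha
      simp at ha
    have hR : {k : ℕ | 1 ≤ k ∧ k ≤ A.card ∧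
        ∃ x : α, ∀ S ∈ prefixFamily D, S.card = k → x ∈ S} = ∅ := by
      ext k
      simp only [Set.mem_setOf_eq, Set.mem_empty_iff_false, iff_false, not_and]
      intro h1 h2
      exfalso; omega
    rw [hL, hR, Nat.sInf_empty]
    have hnb : ¬ BddAbove (Set.univ : Set ℕ) := by
      rintro ⟨b, hb⟩
      have := hb (Set.mem_univ (b + 1))
      omega
    rw [csSup_of_not_bddAbove hnb, csSup_empty]
    rfl
  · -- nonempty ground set
    have hApos : 0 < A.card := by omega
    have hl0len : l0.length = A.card := length_of_mem_PrefOn hl0P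
    -- the maximal achieved position of each alternative
    set M : α → ℕ := fun x => sSup {j | ∃ l ∈ D, l[j]? = some x} with hM
    have hach_lt : ∀ (x : α) (j : ℕ), (∃ l ∈ D, l[j]? = some x) → j < A.card := by
      rintro x j ⟨l, hl, hget⟩
      have := (List.getElem?_eq_some_iff.mp hget).1
      rwa [length_of_mem_PrefOn (mem_PrefOn_of_mem hD hl)] at this
    have hach_ne : ∀ x ∈ A, ∃ j : ℕ, (∃ l ∈ D, l[j]? = some x) := by
      intro x hx
      have : x ∈ l0 := by rw [← List.mem_toFinset, hl0P.2]; exact hx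
      obtain ⟨j, hj⟩ := List.mem_iff_getElem?.mp this
      exact ⟨j, l0, hl0, hj⟩
    have hbdd : ∀ x : α, BddAbove {j : ℕ | ∃ l ∈ D, l[j]? = some x} := by
      intro x
      exact ⟨A.card, fun j hj => le_of_lt (hach_lt x j hj)⟩
    have hMmem : ∀ x ∈ A, ∃ l ∈ D, l[M x]? = some x := by
      intro x hx
      exact Nat.sSup_mem (hach_ne x hx) (hbdd x)
    have hMlt : ∀ x ∈ A, M x < A.card := fun x hx => hach_lt x (M x) (hMmem x hx)
    have hle_M : ∀ (x : α) (j : ℕ), (∃ l ∈ D, l[j]? = some x) → j ≤ M x := by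
      intro x j hj
      exact le_csSup (hbdd x) hj
    have hdown : ∀ x ∈ A, ∀ i, i ≤ M x → ∃ l ∈ D, l[i]? = some x := by
      intro x hx i hi
      exact achieves_of_le hD x (M x) (hMmem x hx) i hi
    -- the candidate common value
    set S0 : Set ℕ := {k | ∃ x ∈ A, M x < k} with hS0
    obtain ⟨x0, hx0⟩ := Finset.card_pos.mp hApos
    have hS0ne : S0.Nonempty := ⟨M x0 + 1, x0, hx0, by omega⟩
    set m0 := sInf S0 with hm0
    have hm0mem : m0 ∈ S0 := Nat.sInf_mem hS0ne
    have hm0pos : 1 ≤ m0 := by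
      rcases Nat.eq_zero_or_pos m0 with h | h
      · exfalso
        rw [h] at hm0mem
        obtain ⟨x, -, hx⟩ := hm0mem
        omega
      · exact h
    have hm0card : m0 ≤ A.card := Nat.sInf_le ⟨x0, hx0, hMlt x0 hx0⟩
    -- identify the left-hand side
    have hLHS : {k : ℕ | IsKRich A D k} = Set.Iic m0 := by
      ext k
      simp only [Set.mem_setOf_eq, Set.mem_Iic]
      constructor
      · intro hrich
        by_contra hk
        push_neg at hk
        obtain ⟨x, hxA, hxM⟩ := hm0mem
        obtain ⟨l, hl, hget⟩ := hrich (m0 + 1) (by omega) (by omega) x hxA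
        have : m0 + 1 - 1 = m0 := by omega
        rw [this] at hget
        have := hle_M x m0 ⟨l, hl, hget⟩
        omega
      · intro hk j hj1 hjk a haA
        have hma : m0 ≤ M a + 1 := Nat.sInf_le ⟨a, haA, by omega⟩
        exact hdown a haA (j - 1) (by omega)
    -- identify the right-hand side
    have hcard_take : ∀ (l : List α), l ∈ D → ∀ k', k' ≤ l.length →
        ((l.take k').toFinset.card = k') := by
      intro l hl k' hk'
      have hnodup : (l.take k').Nodup :=
        (List.take_sublist k' l).nodup (mem_PrefOn_of_mem hD hl).1
      rw [List.toFinset_card_of_nodup hnodup, List.length_take]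
      omega
    have hm0R : m0 ∈ {k : ℕ | 1 ≤ k ∧ k ≤ A.card ∧
        ∃ x : α, ∀ S ∈ prefixFamily D, S.card = k → x ∈ S} := by
      refine ⟨hm0pos, hm0card, ?_⟩
      obtain ⟨x, hxA, hxM⟩ := hm0mem
      refine ⟨x, ?_⟩
      rintro S ⟨l, hl, k', hk'1, hk'len, rfl⟩ hcard
      rw [hcard_take l hl k' hk'len] at hcard
      subst hcard
      rw [List.mem_toFinset, mem_take_iff]
      have hxl : x ∈ l := by
        rw [← List.mem_toFinset, (mem_PrefOn_of_mem hD hl).2]; exact hxA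
      obtain ⟨j, hj⟩ := List.mem_iff_getElem?.mp hxl
      refine ⟨j, ?_, hj⟩
      have := hle_M x j ⟨l, hl, hj⟩
      omega
    have hRlb : ∀ k ∈ {k : ℕ | 1 ≤ k ∧ k ≤ A.card ∧
        ∃ x : α, ∀ S ∈ prefixFamily D, S.card = k → x ∈ S}, m0 ≤ k := by
      rintro k ⟨hk1, hkn, x, hx⟩
      have hkl0 : k ≤ l0.length := by omega
      have hS1 : (l0.take k).toFinset ∈ prefixFamily D := ⟨l0, hl0, k, hk1, hkl0, rfl⟩
      have hxS1 : x ∈ (l0.take k).toFinset := hx _ hS1 (hcard_take l0 hl0 k hkl0)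
      have hxA : x ∈ A := by
        rw [← hl0P.2, List.mem_toFinset]
        exact List.mem_of_mem_take (List.mem_toFinset.mp hxS1)
      apply Nat.sInf_le
      refine ⟨x, hxA, ?_⟩
      -- every achieved position of x is < k
      have hlt : ∀ j, (∃ l ∈ D, l[j]? = some x) → j < k := by
        rintro j ⟨l, hl, hget⟩
        have hklen : k ≤ l.length := by
          rw [length_of_mem_PrefOn (mem_PrefOn_of_mem hD hl)]; omega
        have hS2 : (l.take k).toFinset ∈ prefixFamily D := ⟨l, hl, k, hk1, hklen, rfl⟩
        have hxS2 : x ∈ (l.take k).toFinset := hx _ hS2 (hcard_take l hl k hklen)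
        obtain ⟨j', hj'k, hj'⟩ := mem_take_iff.mp (List.mem_toFinset.mp hxS2)
        have hjlen : j < l.length := (List.getElem?_eq_some_iff.mp hget).1
        have : j = j' := (List.getElem?_inj hjlen (mem_PrefOn_of_mem hD hl).1).mp (by rw [hget, hj'])
        omega
      exact hlt (M x) (hMmem x hxA)
    have hRHS : sInf {k : ℕ | 1 ≤ k ∧ k ≤ A.card ∧
        ∃ x : α, ∀ S ∈ prefixFamily D, S.card = k → x ∈ S} = m0 := by
      apply le_antisymm (Nat.sInf_le hm0R)
      exact hRlb _ (Nat.sInf_mem ⟨m0, hm0R⟩)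
    rw [hLHS, hRHS, csSup_Iic]
end

section
/- Let A be a finite set with |A| ≥ 3 and let a_1, a_2 ∈ A be distinct. Suppose that V_i is a regular vine on A∖{a_i} for i ∈ {1,2} and that V' is a regular vine on A∖{a_1,a_2} with V' ⊆ V_1 ∩ V_2. Then V' = V_1 ∩ V_2. -/
variable {α : Type*} [DecidableEq α]

/-- `T` is covered by `S` in the family `V`, ordered by inclusion. -/
def CoversIn (V : Set (Finset α)) (T S : Finset α) : Prop :=
  T ∈ V ∧ S ∈ V ∧ T ⊂ S ∧ ∀ U ∈ V, T ⊂ U → U ⊂ S → False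

/-- `S` is a minimal element of the family `V`, ordered by inclusion. -/
def MinimalIn (V : Set (Finset α)) (S : Finset α) : Prop :=
  S ∈ V ∧ ∀ T ∈ V, T ⊆ S → T = S

/-- `C` is a maximal chain of the family `V`, ordered by inclusion. -/
def IsMaxChainIn (V C : Set (Finset α)) : Prop :=
  C ⊆ V ∧ IsChain (· ⊆ ·) C ∧ ∀ S ∈ V, IsChain (· ⊆ ·) (insert S C) → S ∈ C

/-- The `i`-th associated graph of a family `V`: vertices are the elements of `V`
of cardinality `i`, and each element of `V` of cardinality `i+1` is an edge
joining the two elements it covers. -/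
def vineGraph (V : Set (Finset α)) (i : ℕ) :
    SimpleGraph {S : Finset α // S ∈ V ∧ S.card = i} where
  Adj S T := S ≠ T ∧ ∃ W ∈ V, W.card = i + 1 ∧ CoversIn V S.1 W ∧ CoversIn V T.1 W
  symm := by
    constructor
    rintro S T ⟨h, W, hW, hc, h1, h2⟩
    exact ⟨h.symm, W, hW, hc, h2, h1⟩
  loopless := by
    constructor
    rintro S ⟨h, -⟩
    exact h rfl

/-- A regular vine on a finite set `A` (poset definition): a family of nonempty
subsets of `A` such that (1) all maximal chains have length `|A| - 1` and all
minimal elements are singletons, (2) there are exactly `|A|` minimal elements,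
(3) every non-minimal element covers exactly two elements, (4) each associated
graph is a tree, and (5) proximity holds. -/
def IsRegularVine (A : Finset α) (V : Set (Finset α)) : Prop :=
  (∀ S ∈ V, S ⊆ A ∧ S.Nonempty) ∧
  (∀ C : Set (Finset α), IsMaxChainIn V C → C.ncard = A.card) ∧
  (∀ S, MinimalIn V S → S.card = 1) ∧
  {S | MinimalIn V S}.ncard = A.card ∧
  (∀ S ∈ V, (∃ T ∈ V, T ⊂ S) → {T | CoversIn V T S}.ncard = 2) ∧
  (∀ i : ℕ, 1 ≤ i → i ≤ A.card - 1 → (vineGraph V i).IsTree) ∧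
  (∀ S ∈ V, ∀ T ∈ V, S ≠ T → S.card = T.card → 2 ≤ S.card →
    (∃ W, CoversIn V S W ∧ CoversIn V T W) → ∃ U, CoversIn V U S ∧ CoversIn V U T)

set_option maxHeartbeats 1000000
set_option linter.unusedSectionVars false

variable {B : Finset α} {V : Set (Finset α)}

lemma exists_maxChainIn (V : Set (Finset α)) {C₀ : Set (Finset α)} (hC₀V : C₀ ⊆ V)
    (hC₀ : IsChain (· ⊆ ·) C₀) : ∃ C, IsMaxChainIn V C ∧ C₀ ⊆ C := by
  have hc : IsChain (fun x y : ↥V => x.1 ⊆ y.1) {x : ↥V | ↑x ∈ C₀} := by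
    intro x hx y hy hxy
    exact hC₀ hx hy (fun h => hxy (Subtype.ext h))
  obtain ⟨t, ⟨htc, htmax⟩, hst⟩ := hc.exists_maxChain
  refine ⟨Subtype.val '' t, ⟨?_, ?_, ?_⟩, ?_⟩
  · rintro x ⟨y, -, rfl⟩; exact y.2
  · rintro x ⟨y, hy, rfl⟩ z ⟨w, hw, rfl⟩ hxz
    exact htc hy hw (fun h => hxz (by rw [h]))
  · intro S' hS' hins
    by_contra hnot
    have hss : t ⊂ insert ⟨S', hS'⟩ t := by
      constructor
      · exact Set.subset_insert _ _
      · intro hsub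
        exact hnot ⟨_, hsub (Set.mem_insert _ _), rfl⟩
    refine hss.ne (htmax ?_ hss.subset)
    rintro x hx y hy hxy
    rcases hx with rfl | hx <;> rcases hy with rfl | hy
    · exact absurd rfl hxy
    · exact hins (Set.mem_insert _ _) (Set.mem_insert_of_mem _ ⟨y, hy, rfl⟩)
        (fun h => hxy (Subtype.ext h))
    · exact hins (Set.mem_insert_of_mem _ ⟨x, hx, rfl⟩) (Set.mem_insert _ _)
        (fun h => hxy (Subtype.ext h))
    · exact htc hx hy (fun h => hxy (by rw [h]))
  · intro x hx
    exact ⟨⟨x, hC₀V hx⟩, hst hx, rfl⟩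

variable {B : Finset α} {V : Set (Finset α)}

lemma vine_finite (hV : IsRegularVine B V) : V.Finite :=
  (B.powerset : Finset (Finset α)).finite_toSet.subset
    (fun S hS => Finset.mem_coe.2 (Finset.mem_powerset.2 (hV.1 S hS).1))

lemma chain_card_injOn {C : Set (Finset α)} (hc : IsChain (· ⊆ ·) C) :
    Set.InjOn Finset.card C := by
  intro S hS T hT h
  by_contra hne
  rcases hc hS hT hne with hsub | hsub
  · exact absurd h (Finset.card_lt_card (ssubset_of_subset_of_ne hsub hne)).ne
  · exact absurd h.symm (Finset.card_lt_card (ssubset_of_subset_of_ne hsub (Ne.symm hne))).ne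

lemma maxchain_exists_card (hV : IsRegularVine B V) {C : Set (Finset α)}
    (hC : IsMaxChainIn V C) {i : ℕ} (h1 : 1 ≤ i) (h2 : i ≤ B.card) :
    ∃ U ∈ C, U.card = i := by
  have hCV := hC.1
  have hch := hC.2.1
  have hCfin : C.Finite := (vine_finite hV).subset hCV
  have himsub : Finset.card '' C ⊆ Set.Icc 1 B.card := by
    rintro k ⟨S, hS, rfl⟩
    have h := hV.1 S (hCV hS)
    exact ⟨Finset.card_pos.2 h.2, Finset.card_le_card h.1⟩
  have heq : Finset.card '' C = Set.Icc 1 B.card := by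
    apply Set.eq_of_subset_of_ncard_le himsub _ (Set.finite_Icc _ _)
    rw [Set.ncard_image_of_injOn (chain_card_injOn hch), hV.2.1 C hC, ← Finset.coe_Icc,
      Set.ncard_coe_finset, Nat.card_Icc]
    simp
  have : i ∈ Finset.card '' C := heq ▸ Set.mem_Icc.2 ⟨h1, h2⟩
  obtain ⟨U, hU, hUc⟩ := this
  exact ⟨U, hU, hUc⟩

lemma coversIn_card (hV : IsRegularVine B V) {T S : Finset α} (h : CoversIn V T S) :
    S.card = T.card + 1 := by
  obtain ⟨hT, hS, hTS, hcov⟩ := h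
  have hchain : IsChain (· ⊆ ·) ({T, S} : Set (Finset α)) := by
    apply IsChain.insert (Set.Subsingleton.isChain (by simp))
    intro y hy _
    simp only [Set.mem_singleton_iff] at hy
    exact Or.inl (hy ▸ hTS.subset)
  have hsubV : ({T, S} : Set (Finset α)) ⊆ V := by
    rintro x (rfl | rfl); exacts [hT, hS]
  obtain ⟨C, hC, hTSC⟩ := exists_maxChainIn V hsubV hchain
  have hTC : T ∈ C := hTSC (Set.mem_insert _ _)
  have hSC : S ∈ C := hTSC (by simp)
  have hk1 : T.card + 1 ≤ B.card :=
    le_trans (Finset.card_lt_card hTS) (Finset.card_le_card (hV.1 S hS).1)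
  obtain ⟨U, hUC, hUcard⟩ := maxchain_exists_card hV hC (Nat.le_add_left 1 T.card) hk1
  have hTU : T ⊂ U := by
    have hne : T ≠ U := fun h => by simp [← h] at hUcard
    rcases hC.2.1 hTC hUC hne with h | h
    · exact ssubset_of_subset_of_ne h hne
    · exact absurd hUcard (by have := Finset.card_le_card h; omega)
  rcases eq_or_ne U S with rfl | hneUS
  · omega
  rcases hC.2.1 hUC hSC hneUS with h | h
  · exact absurd (ssubset_of_subset_of_ne h hneUS) (fun hss => hcov U (hC.1 hUC) hTU hss)
  · have h1 := Finset.card_le_card h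
    have h2 := Finset.card_lt_card hTS
    omega

lemma singleton_mem_vine (hV : IsRegularVine B V) {b : α} (hb : b ∈ B) : {b} ∈ V := by
  have hsub : {S | MinimalIn V S} ⊆ (fun b : α => ({b} : Finset α)) '' ↑B := by
    intro S hS
    have h1 : S.card = 1 := hV.2.2.1 S hS
    obtain ⟨c, rfl⟩ := Finset.card_eq_one.1 h1
    have := (hV.1 _ hS.1).1
    exact ⟨c, by simpa using this, rfl⟩
  have heq : {S | MinimalIn V S} = (fun b : α => ({b} : Finset α)) '' ↑B := by
    apply Set.eq_of_subset_of_ncard_le hsub _ (B.finite_toSet.image _)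
    rw [Set.ncard_image_of_injOn (fun x _ y _ h => by simpa using h), hV.2.2.2.1]
    simp [Set.ncard_coe_finset]
  have : ({b} : Finset α) ∈ {S | MinimalIn V S} := heq ▸ ⟨b, hb, rfl⟩
  exact this.1

lemma cover_pair (hV : IsRegularVine B V) {W : Finset α} (hW : W ∈ V) (h2 : 2 ≤ W.card) :
    ∃ T U, T ≠ U ∧ CoversIn V T W ∧ CoversIn V U W ∧ T ∪ U = W ∧
      ∀ X, CoversIn V X W → X = T ∨ X = U := by
  have hex : ∃ T ∈ V, T ⊂ W := by
    by_contra hcon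
    push_neg at hcon
    have : MinimalIn V W := ⟨hW, fun T hT hTW =>
      by_contra fun hne => hcon T hT (ssubset_of_subset_of_ne hTW hne)⟩
    have := hV.2.2.1 W this
    omega
  have h2' := hV.2.2.2.2.1 W hW hex
  obtain ⟨T, U, hTU, hset⟩ := Set.ncard_eq_two.1 h2'
  have hTc : CoversIn V T W := by rw [Set.ext_iff] at hset; exact (hset T).2 (by simp)
  have hUc : CoversIn V U W := by rw [Set.ext_iff] at hset; exact (hset U).2 (by simp)
  refine ⟨T, U, hTU, hTc, hUc, ?_, fun X hX => by
    have := (Set.ext_iff.1 hset X).1 hX; simpa using this⟩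
  have hTW := coversIn_card hV hTc
  have hUW := coversIn_card hV hUc
  have hsub : T ∪ U ⊆ W := Finset.union_subset hTc.2.2.1.subset hUc.2.2.1.subset
  apply Finset.eq_of_subset_of_card_le hsub
  have hTne : T ≠ T ∪ U := by
    intro h
    have hUT : U ⊆ T := by rw [h]; exact Finset.subset_union_right
    exact hTU (Finset.eq_of_subset_of_card_le hUT (by omega)).symm
  have := Finset.card_lt_card (ssubset_of_subset_of_ne Finset.subset_union_left hTne)
  omega

lemma rank_ncard_succ (hV : IsRegularVine B V) {i : ℕ} (h1 : 1 ≤ i) (h2 : i ≤ B.card - 1) :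
    {S | S ∈ V ∧ S.card = i}.ncard = {S | S ∈ V ∧ S.card = (i + 1)}.ncard + 1 := by
  have htree := hV.2.2.2.2.2.1 i h1 h2
  set G := vineGraph V i with hG
  have hfin1 : {S | S ∈ V ∧ S.card = i}.Finite := (vine_finite hV).subset (fun S hS => hS.1)
  haveI : Fintype {S : Finset α // S ∈ V ∧ S.card = i} := hfin1.fintype
  haveI : Fintype G.edgeSet := Fintype.ofFinite _
  have hcard := htree.card_edgeFinset
  -- adjacency structure
  have hAdjU : ∀ x y : {S : Finset α // S ∈ V ∧ S.card = i}, G.Adj x y →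
      x.1 ∪ y.1 ∈ V ∧ (x.1 ∪ y.1).card = i + 1 ∧ CoversIn V x.1 (x.1 ∪ y.1) ∧
        CoversIn V y.1 (x.1 ∪ y.1) := by
    rintro x y ⟨hne, W, hWV, hWc, c1, c2⟩
    have hvne : x.1 ≠ y.1 := fun h => hne (Subtype.ext h)
    have hsub : x.1 ∪ y.1 ⊆ W := Finset.union_subset c1.2.2.1.subset c2.2.2.1.subset
    have hxne : x.1 ≠ x.1 ∪ y.1 := by
      intro h
      have hUT : y.1 ⊆ x.1 := by rw [h]; exact Finset.subset_union_right
      exact hvne (Finset.eq_of_subset_of_card_le hUT (by rw [x.2.2, y.2.2])).symm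
    have hlt := Finset.card_lt_card (ssubset_of_subset_of_ne Finset.subset_union_left hxne)
    have hWeq : x.1 ∪ y.1 = W := Finset.eq_of_subset_of_card_le hsub
      (by rw [hWc]; omega)
    rw [hWeq]
    exact ⟨hWV, hWc, c1, c2⟩
  set F : Sym2 {S : Finset α // S ∈ V ∧ S.card = i} → Finset α :=
    Sym2.lift ⟨fun x y => x.1 ∪ y.1, fun x y => Finset.union_comm _ _⟩ with hFdef
  have hinj : Set.InjOn F G.edgeSet := by
    intro e₁ he₁ e₂ he₂ heq
    induction e₁ using Sym2.ind with | _ x y => ?_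
    induction e₂ using Sym2.ind with | _ x' y' => ?_
    rw [SimpleGraph.mem_edgeSet] at he₁ he₂
    obtain ⟨hWV, hWc, c1, c2⟩ := hAdjU x y he₁
    obtain ⟨hWV', hWc', c1', c2'⟩ := hAdjU x' y' he₂
    have hU : x.1 ∪ y.1 = x'.1 ∪ y'.1 := by simpa [hFdef] using heq
    rw [← hU] at c1' c2'
    obtain ⟨T, U, hTU, cT, cU, -, huniq⟩ := cover_pair hV hWV (by
      have := x.2.2; omega)
    have hxy : x.1 ≠ y.1 := fun h => he₁.1 (Subtype.ext h)
    have hxy' : x'.1 ≠ y'.1 := fun h => he₂.1 (Subtype.ext h)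
    have hx := huniq _ c1
    have hy := huniq _ c2
    have hx' := huniq _ c1'
    have hy' := huniq _ c2'
    have hkey : (x.1 = x'.1 ∧ y.1 = y'.1) ∨ (x.1 = y'.1 ∧ y.1 = x'.1) := by
      rcases hx with hx | hx <;> rcases hy with hy | hy <;>
        rcases hx' with hx' | hx' <;> rcases hy' with hy' | hy' <;>
        simp_all
    rcases hkey with ⟨hp, hq⟩ | ⟨hp, hq⟩
    · exact Sym2.eq_iff.2 (Or.inl ⟨Subtype.ext hp, Subtype.ext hq⟩)
    · exact Sym2.eq_iff.2 (Or.inr ⟨Subtype.ext hp, Subtype.ext hq⟩)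
  have himg : F '' G.edgeSet = {S | S ∈ V ∧ S.card = (i + 1)} := by
    ext W
    constructor
    · rintro ⟨e, he, rfl⟩
      revert he
      refine Sym2.ind ?_ e
      intro x y he
      rw [SimpleGraph.mem_edgeSet] at he
      obtain ⟨h1, h2, -, -⟩ := hAdjU x y he
      exact ⟨h1, h2⟩
    · rintro ⟨hWV, hWc⟩
      obtain ⟨T, U, hTU, cT, cU, hun, -⟩ := cover_pair hV hWV (by omega)
      have hTcard : T.card = i := by have := coversIn_card hV cT; omega
      have hUcard : U.card = i := by have := coversIn_card hV cU; omega
      refine ⟨s(⟨T, cT.1, hTcard⟩, ⟨U, cU.1, hUcard⟩), ?_, by simp [hFdef, hun]⟩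
      rw [SimpleGraph.mem_edgeSet]
      exact ⟨fun h => hTU (congrArg Subtype.val h), W, hWV, hWc, cT, cU⟩
  have e1 : {S | S ∈ V ∧ S.card = (i + 1)}.ncard = G.edgeSet.ncard := by
    rw [← himg, Set.ncard_image_of_injOn hinj]
  have e2 : G.edgeSet.ncard = G.edgeFinset.card := by
    rw [SimpleGraph.edgeFinset_card, ← Nat.card_eq_fintype_card, Nat.card_coe_set_eq]
  have e3 : Fintype.card {S : Finset α // S ∈ V ∧ S.card = i}
      = {S | S ∈ V ∧ S.card = i}.ncard := by
    rw [← Nat.card_eq_fintype_card]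
    exact Nat.card_coe_set_eq _
  omega


lemma rank_ncard (hV : IsRegularVine B V) {i : ℕ} (h1 : 1 ≤ i) (h2 : i ≤ B.card) :
    {S | S ∈ V ∧ S.card = i}.ncard + i = B.card + 1 := by
  induction i, h1 using Nat.le_induction with
  | base =>
    have heq : {S | S ∈ V ∧ S.card = 1} = {S | MinimalIn V S} := by
      ext S
      constructor
      · rintro ⟨hS, hc⟩
        refine ⟨hS, fun T hT hTS => ?_⟩
        have h1 : 1 ≤ T.card := Finset.card_pos.2 (hV.1 T hT).2
        exact Finset.eq_of_subset_of_card_le hTS (by omega)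
      · intro hS
        exact ⟨hS.1, hV.2.2.1 S hS⟩
    rw [heq, hV.2.2.2.1]
  | succ i hi IH =>
    have hstep := rank_ncard_succ hV hi (by omega)
    have := IH (by omega)
    omega

/-- If `V₁`, `V₂` are regular vines on `A ∖ {a₁}`, `A ∖ {a₂}` and `V'` is a
regular vine on `A ∖ {a₁, a₂}` with `V' ⊆ V₁ ∩ V₂`, then `V' = V₁ ∩ V₂`. -/
theorem vine_intersection (A : Finset α) (h3 : 3 ≤ A.card)
    (a₁ a₂ : α) (ha₁ : a₁ ∈ A) (ha₂ : a₂ ∈ A) (hne : a₁ ≠ a₂)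
    (V₁ V₂ V' : Set (Finset α))
    (hV₁ : IsRegularVine (A.erase a₁) V₁) (hV₂ : IsRegularVine (A.erase a₂) V₂)
    (hV' : IsRegularVine (A \ {a₁, a₂}) V') (hsub : V' ⊆ V₁ ∩ V₂) :
    V' = V₁ ∩ V₂ := by
  have hc1 : (A.erase a₁).card = A.card - 1 := Finset.card_erase_of_mem ha₁
  have hsd : A \ {a₁, a₂} = (A.erase a₁).erase a₂ := by
    ext x
    simp only [Finset.mem_sdiff, Finset.mem_erase, Finset.mem_insert, Finset.mem_singleton]
    tauto
  have ha₂e : a₂ ∈ A.erase a₁ := Finset.mem_erase.2 ⟨hne.symm, ha₂⟩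
  have hc' : (A \ {a₁, a₂}).card = A.card - 2 := by
    rw [hsd, Finset.card_erase_of_mem ha₂e, hc1]
    omega
  apply Set.Subset.antisymm hsub
  rintro S ⟨hS1, hS2⟩
  have hSB1 : S ⊆ A.erase a₁ := (hV₁.1 S hS1).1
  have hSB2 : S ⊆ A.erase a₂ := (hV₂.1 S hS2).1
  have hSne : S.Nonempty := (hV₁.1 S hS1).2
  have ha₂S : a₂ ∉ S := fun h => (Finset.mem_erase.1 (hSB2 h)).1 rfl
  have hi1 : 1 ≤ S.card := Finset.card_pos.2 hSne
  have hile : S.card ≤ A.card - 1 := hc1 ▸ Finset.card_le_card hSB1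
  have hine : S.card ≠ A.card - 1 := by
    intro h
    have : S = A.erase a₁ := Finset.eq_of_subset_of_card_le hSB1 (by omega)
    exact ha₂S (this ▸ ha₂e)
  have hile2 : S.card ≤ A.card - 2 := by omega
  -- an element of V₁ of cardinality S.card containing a₂
  have hsing : ({a₂} : Finset α) ∈ V₁ := singleton_mem_vine hV₁ ha₂e
  have hchain : IsChain (· ⊆ ·) ({({a₂} : Finset α)} : Set (Finset α)) :=
    Set.Subsingleton.isChain (by simp)
  obtain ⟨C, hC, hmemC⟩ := exists_maxChainIn V₁ (by simpa using hsing) hchain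
  obtain ⟨U, hUC, hUcard⟩ := maxchain_exists_card hV₁ hC hi1 (by omega)
  have haU : a₂ ∈ U := by
    have hsC : ({a₂} : Finset α) ∈ C := hmemC rfl
    rcases eq_or_ne U {a₂} with rfl | hneU
    · simp
    rcases hC.2.1 hUC hsC hneU with h | h
    · exact absurd (Finset.eq_of_subset_of_card_le h (by rw [Finset.card_singleton, hUcard]; exact hi1)) hneU
    · exact h (by simp)
  have hUV₁ : U ∈ V₁ := hC.1 hUC
  have hUQ : U ∉ V₂ := fun h => (Finset.mem_erase.1 ((hV₂.1 U h).1 haU)).1 rfl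
  -- counting
  set i := S.card with hidef
  set P := {T | T ∈ V' ∧ T.card = i} with hP
  set Q := {T | (T ∈ V₁ ∧ T ∈ V₂) ∧ T.card = i} with hQ
  set R := {T | T ∈ V₁ ∧ T.card = i} with hR
  have hRfin : R.Finite := (vine_finite hV₁).subset (fun T hT => hT.1)
  have hQfin : Q.Finite := hRfin.subset (fun T hT => ⟨hT.1.1, hT.2⟩)
  have hPcard : P.ncard + i = (A.card - 2) + 1 := by
    have := rank_ncard hV' hi1 (by omega)
    rwa [hc'] at this
  have hRcard : R.ncard + i = (A.card - 1) + 1 := by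
    have := rank_ncard hV₁ hi1 (by omega)
    rwa [hc1] at this
  have hUR : U ∈ R := ⟨hUV₁, hUcard⟩
  have hUQn : U ∉ Q := fun h => hUQ h.1.2
  have hins : insert U Q ⊆ R := by
    rintro T (rfl | hT)
    · exact hUR
    · exact ⟨hT.1.1, hT.2⟩
  have hQle : Q.ncard + 1 ≤ R.ncard := by
    rw [← Set.ncard_insert_of_notMem hUQn hQfin]
    exact Set.ncard_le_ncard hins hRfin
  have hPQ : P ⊆ Q := fun T hT => ⟨⟨(hsub hT.1).1, (hsub hT.1).2⟩, hT.2⟩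
  have hPeQ : P = Q := Set.eq_of_subset_of_ncard_le hPQ (by omega) hQfin
  have hSQ : S ∈ Q := ⟨⟨hS1, hS2⟩, rfl⟩
  rw [← hPeQ] at hSQ
  exact hSQ.1
end
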